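/- For k ≥ 2, the map c̄_r · (x₁x₂x₃…) = ((x₁+r)(x₂+x₁)(x₃+x₂)…), with additions modulo k, defines a faithful action of the lamplighter group L_k = (ℤ/kℤ) ≀ ℤ by automorphisms on the rooted k-regular tree (vertices = finite strings over {0,…,k−1}), and this action is transitive on each level of the tree. -/

import Mathlib

open scoped commutatorElement

/-- Relators of the standard presentation `⟨b, c | cᵏ, [c, bⁿcb⁻ⁿ]⟩` of the lamplighter
group `ℤ/kℤ ≀ ℤ`, over the alphabet `Bool` with `b = of true` and `c = of false`. -/
def llRels (k : ℕ) : Set (FreeGroup Bool) :=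
  {(FreeGroup.of false) ^ k} ∪
    ⋃ n : ℕ, {⁅FreeGroup.of false,
      (FreeGroup.of true) ^ n * FreeGroup.of false * ((FreeGroup.of true)⁻¹) ^ n⁆}

/-- The lamplighter group `L_k = ℤ/kℤ ≀ ℤ`, via its standard presentation. -/
abbrev Lamplighter (k : ℕ) := PresentedGroup (llRels k)

/-- The generator `b` (the shift). -/
def llb (k : ℕ) : Lamplighter k := PresentedGroup.of true

/-- The generator `c` (the lamp at position 0). -/
def llc (k : ℕ) : Lamplighter k := PresentedGroup.of false

/-- The action of the generator `c̄_r = cʳb` on finite strings over `{0,…,k−1}`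
(realized as `ZMod k`): `c̄_r · (x₁x₂x₃…) = (x₁+r)(x₂+x₁)(x₃+x₂)…`, additions mod `k`. -/
def lampAct (k : ℕ) : ZMod k → List (ZMod k) → List (ZMod k)
  | _, [] => []
  | r, x :: xs => (x + r) :: lampAct k x xs

namespace LL
variable {k : ℕ}

def unlamp (k : ℕ) : ZMod k → List (ZMod k) → List (ZMod k)
  | _, [] => []
  | r, y :: ys => (y - r) :: unlamp k (y - r) ys

lemma unlamp_lamp : ∀ (l : List (ZMod k)) (r), unlamp k r (lampAct k r l) = l
  | [], _ => rfl
  | x :: xs, r => by simp [lampAct, unlamp, unlamp_lamp xs x]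

lemma lamp_unlamp : ∀ (l : List (ZMod k)) (r), lampAct k r (unlamp k r l) = l
  | [], _ => rfl
  | y :: ys, r => by simp [lampAct, unlamp, lamp_unlamp ys (y - r)]

/-- The permutation given by `lampAct k r`. -/
def lampPerm (k : ℕ) (r : ZMod k) : Equiv.Perm (List (ZMod k)) :=
  ⟨lampAct k r, unlamp k r, fun l => unlamp_lamp l r, fun l => lamp_unlamp l r⟩

/-- Translation action: add `f i` to the `i`-th letter. -/
def tAct (k : ℕ) : (ℕ → ZMod k) → List (ZMod k) → List (ZMod k)
  | _, [] => []
  | f, x :: xs => (x + f 0) :: tAct k (f ∘ Nat.succ) xs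

lemma tAct_tAct : ∀ (l : List (ZMod k)) (f g), tAct k f (tAct k g l) = tAct k (f + g) l
  | [], _, _ => rfl
  | x :: xs, f, g => by
      simp only [tAct, tAct_tAct xs, Pi.add_apply]
      congr 1
      ring

lemma tAct_zero : ∀ l : List (ZMod k), tAct k 0 l = l
  | [] => rfl
  | x :: xs => by simp [tAct, tAct_zero xs]

lemma tAct_congr {f g : ℕ → ZMod k} (h : f = g) (l : List (ZMod k)) : tAct k f l = tAct k g l := by
  rw [h]

/-- Translation permutation. -/
def tPerm (k : ℕ) (f : ℕ → ZMod k) : Equiv.Perm (List (ZMod k)) :=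
  ⟨tAct k f, tAct k (-f), fun l => by rw [tAct_tAct, neg_add_cancel, tAct_zero],
    fun l => by rw [tAct_tAct, add_neg_cancel, tAct_zero]⟩

@[simp] lemma tPerm_apply (f : ℕ → ZMod k) (l) : tPerm k f l = tAct k f l := rfl

lemma tPerm_mul (f g : ℕ → ZMod k) : tPerm k f * tPerm k g = tPerm k (f + g) :=
  Equiv.ext fun l => tAct_tAct l f g

lemma tPerm_zero : tPerm k 0 = 1 := Equiv.ext fun l => tAct_zero l

lemma tPerm_inv (f : ℕ → ZMod k) : (tPerm k f)⁻¹ = tPerm k (-f) := by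
  rw [eq_comm, eq_inv_iff_mul_eq_one, tPerm_mul, neg_add_cancel, tPerm_zero]

lemma tPerm_comm (f g : ℕ → ZMod k) : tPerm k f * tPerm k g = tPerm k g * tPerm k f := by
  rw [tPerm_mul, tPerm_mul, add_comm]

lemma tPerm_pow (f : ℕ → ZMod k) (n : ℕ) : tPerm k f ^ n = tPerm k (n • f) := by
  induction n with
  | zero => simp [tPerm_zero]
  | succ n ih => rw [pow_succ, ih, tPerm_mul, succ_nsmul]

lemma tPerm_zpow (f : ℕ → ZMod k) (n : ℤ) : tPerm k f ^ n = tPerm k (n • f) := by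
  cases n with
  | ofNat n => simpa using tPerm_pow f n
  | negSucc n =>
      rw [zpow_negSucc, tPerm_pow, tPerm_inv]
      congr 1
      funext i
      simp [Int.negSucc_eq]
      ring

lemma tPerm_injective : Function.Injective (tPerm k) := by
  have key : ∀ (n : ℕ) (f : ℕ → ZMod k),
      tAct k f (List.replicate n 0) = List.ofFn (fun j : Fin n => f j) := by
    intro n
    induction n with
    | zero => intro f; rfl
    | succ n ih =>
      intro f
      rw [List.replicate_succ, List.ofFn_succ]
      simp [tAct, ih]
  intro f g h
  funext j
  have := congrArg (fun σ : Equiv.Perm (List (ZMod k)) => σ (List.replicate (j+1) 0)) h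
  simp only [tPerm_apply, key] at this
  have h2 := List.ofFn_inj.mp this
  exact congrFun h2 ⟨j, Nat.lt_succ_self j⟩

/-- `pushA s f` sends `(f 0, f 1, f 2, …)` to `(f 0 + s, f 1 + f 0, f 2 + f 1, …)`. -/
def pushA (k : ℕ) (s : ZMod k) (f : ℕ → ZMod k) : ℕ → ZMod k
  | 0 => f 0 + s
  | (i+1) => f (i+1) + f i

def push (k : ℕ) (f : ℕ → ZMod k) : ℕ → ZMod k
  | 0 => f 0
  | (i+1) => f (i+1) + f i

def pushInv (k : ℕ) (f : ℕ → ZMod k) : ℕ → ZMod k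
  | 0 => f 0
  | (i+1) => f (i+1) - pushInv k f i

lemma pushA_zero (f : ℕ → ZMod k) : pushA k 0 f = push k f := by
  funext i; cases i <;> simp [pushA, push]

lemma pushA_comp_succ (s : ZMod k) (f : ℕ → ZMod k) :
    (pushA k s f) ∘ Nat.succ = pushA k (f 0) (f ∘ Nat.succ) := by
  funext i; cases i <;> rfl

lemma push_pushInv (f : ℕ → ZMod k) : push k (pushInv k f) = f := by
  funext i; cases i with
  | zero => rfl
  | succ i => simp [push, pushInv]

lemma pushInv_push (f : ℕ → ZMod k) : pushInv k (push k f) = f := by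
  funext i
  induction i with
  | zero => rfl
  | succ i ih => simp [push, pushInv, ih]

lemma push_add (f g : ℕ → ZMod k) : push k (f + g) = push k f + push k g := by
  funext i; cases i <;> simp [push] <;> ring


/-- `push` as an additive automorphism. -/
def pushE (k : ℕ) : AddAut (ℕ → ZMod k) :=
  { toFun := push k
    invFun := pushInv k
    left_inv := pushInv_push
    right_inv := push_pushInv
    map_add' := push_add }

lemma pushE_smul (r : ZMod k) (f : ℕ → ZMod k) : pushE k (r • f) = r • pushE k f := by
  funext i; cases i <;> simp [pushE, push, mul_add]

lemma pushE_inv_smul (r : ZMod k) (f : ℕ → ZMod k) :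
    (-pushE k) (r • f) = r • (-pushE k) f := by
  show pushInv k (r • f) = r • pushInv k f
  funext i
  induction i with
  | zero => simp [pushInv]
  | succ i ih => simp [pushInv, ih, mul_sub]

lemma pushE_zpow_smul (i : ℤ) (r : ZMod k) (f : ℕ → ZMod k) :
    (i • pushE k) (r • f) = r • (i • pushE k) f := by
  induction i using Int.induction_on generalizing f with
  | zero => rfl
  | succ n ih =>
      rw [add_one_zsmul, AddAut.add_apply, pushE_smul, ih, AddAut.add_apply]
  | pred n ih =>
      rw [sub_one_zsmul, AddAut.add_apply, pushE_inv_smul, ih, AddAut.add_apply]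

/-- Key computation: `lampAct` conjugates translations to translations. -/
lemma lamp_tAct : ∀ (l : List (ZMod k)) (f : ℕ → ZMod k) (r s : ZMod k),
    lampAct k (r + s) (tAct k f l) = tAct k (pushA k s f) (lampAct k r l)
  | [], _, _, _ => rfl
  | x :: xs, f, r, s => by
      simp only [tAct, lampAct, pushA_comp_succ]
      rw [lamp_tAct xs (f ∘ Nat.succ) x (f 0)]
      congr 1
      show x + f 0 + (r + s) = x + r + (f 0 + s)
      ring

lemma B_conj_tPerm (f : ℕ → ZMod k) :
    MulAut.conj (lampPerm k 0) (tPerm k f) = tPerm k (pushE k f) := by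
  rw [MulAut.conj_apply, mul_inv_eq_iff_eq_mul]
  apply Equiv.ext
  intro l
  show lampAct k 0 (tAct k f l) = tAct k (push k f) (lampAct k 0 l)
  have := lamp_tAct l f 0 0
  rwa [add_zero, pushA_zero] at this

lemma B_conj_inv_tPerm (f : ℕ → ZMod k) :
    MulAut.conj (lampPerm k 0)⁻¹ (tPerm k f) = tPerm k ((-pushE k) f) := by
  have h := B_conj_tPerm (k := k) ((-pushE k) f)
  rw [show (pushE k) ((-pushE k) f) = f from (pushE k).apply_symm_apply f] at h
  rw [← h, MulAut.conj_apply, MulAut.conj_apply]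
  group

lemma B_zpow_conj_tPerm (i : ℤ) (f : ℕ → ZMod k) :
    MulAut.conj (lampPerm k 0 ^ i) (tPerm k f) = tPerm k ((i • pushE k) f) := by
  induction i using Int.induction_on generalizing f with
  | zero => simp [MulAut.conj_apply]
  | succ n ih =>
      rw [zpow_add_one, map_mul, MulAut.mul_apply, B_conj_tPerm, ih,
        add_one_zsmul, AddAut.add_apply]
  | pred n ih =>
      rw [zpow_sub_one, map_mul, MulAut.mul_apply, B_conj_inv_tPerm, ih,
        sub_one_zsmul, AddAut.add_apply]

/-- The delta function at 0. -/
def d0 (k : ℕ) : ℕ → ZMod k := fun i => if i = 0 then 1 else 0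

lemma d0_comp_succ : d0 k ∘ Nat.succ = 0 := by
  funext i; simp [d0]

lemma k_smul (f : ℕ → ZMod k) : k • f = 0 := by
  funext i
  show k • f i = 0
  rw [nsmul_eq_mul, ZMod.natCast_self, zero_mul]

/-- The generators: `true ↦ B`, `false ↦ C`. -/
def fgen (k : ℕ) : Bool → Equiv.Perm (List (ZMod k))
  | true => lampPerm k 0
  | false => tPerm k (d0 k)

lemma conj_pow_BC (n : ℕ) :
    lampPerm k 0 ^ n * tPerm k (d0 k) * ((lampPerm k 0)⁻¹) ^ n =
      tPerm k (((n : ℤ) • pushE k) (d0 k)) := by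
  have h := B_zpow_conj_tPerm (k := k) (n : ℤ) (d0 k)
  rw [MulAut.conj_apply] at h
  rw [inv_pow, ← zpow_natCast (lampPerm k 0) n, h]

lemma rels_hold (k : ℕ) : ∀ r ∈ llRels k, FreeGroup.lift (fgen k) r = 1 := by
  intro r hr
  rcases hr with h | h
  · rw [Set.mem_singleton_iff] at h
    subst h
    have : FreeGroup.lift (fgen k) (FreeGroup.of false) = tPerm k (d0 k) := by
      simp [fgen]
    rw [map_pow, this, tPerm_pow, k_smul, tPerm_zero]
  · simp only [Set.mem_iUnion, Set.mem_singleton_iff] at h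
    obtain ⟨n, rfl⟩ := h
    rw [map_commutatorElement, map_mul, map_mul, map_pow, map_pow, map_inv]
    simp only [FreeGroup.lift_apply_of]
    show ⁅tPerm k (d0 k), lampPerm k 0 ^ n * tPerm k (d0 k) * ((lampPerm k 0)⁻¹)^n⁆ = 1
    rw [conj_pow_BC]
    exact commutatorElement_eq_one_iff_commute.mpr (tPerm_comm _ _)

/-- The action of the lamplighter group on the tree. -/
def phi (k : ℕ) : Lamplighter k →* Equiv.Perm (List (ZMod k)) :=
  PresentedGroup.toGroup (rels_hold k)

lemma phi_b : phi k (llb k) = lampPerm k 0 := by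
  show phi k (PresentedGroup.of true) = _
  rw [phi, PresentedGroup.toGroup.of]
  rfl

lemma phi_c : phi k (llc k) = tPerm k (d0 k) := by
  show phi k (PresentedGroup.of false) = _
  rw [phi, PresentedGroup.toGroup.of]
  rfl

lemma lampAct_tAct_smul_d0 : ∀ (l : List (ZMod k)) (r : ZMod k),
    tAct k (r • d0 k) (lampAct k 0 l) = lampAct k r l
  | [], _ => rfl
  | x :: xs, r => by
      show (x + 0 + r • d0 k 0) :: tAct k ((r • d0 k) ∘ Nat.succ) (lampAct k x xs)
        = (x + r) :: lampAct k x xs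
      congr 1
      · simp [d0]
      · rw [show (r • d0 k) ∘ Nat.succ = 0 by funext i; simp [d0], tAct_zero]

lemma phi_formula (i : ℕ) (l : List (ZMod k)) :
    phi k ((llc k) ^ i * llb k) l = lampAct k (i : ZMod k) l := by
  rw [map_mul, map_pow, phi_b, phi_c, tPerm_pow]
  show tAct k (i • d0 k) (lampAct k 0 l) = _
  rw [show (i • d0 k) = ((i : ZMod k) • d0 k) from (Nat.cast_smul_eq_nsmul (ZMod k) i (d0 k)).symm]
  exact lampAct_tAct_smul_d0 l _

/-! ### The lamplighter group side -/

lemma rel_one {r : FreeGroup Bool} (hr : r ∈ llRels k) : PresentedGroup.mk (llRels k) r = 1 :=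
  (QuotientGroup.eq_one_iff r).mpr (Subgroup.subset_normalClosure hr)

lemma c_pow_k : (llc k) ^ k = 1 := by
  have h : ((FreeGroup.of false) ^ k : FreeGroup Bool) ∈ llRels k := Or.inl rfl
  have := rel_one h
  rwa [map_pow] at this

lemma comm_rel (n : ℕ) :
    Commute (llc k) ((llb k) ^ n * llc k * ((llb k)⁻¹) ^ n) := by
  have h : (⁅FreeGroup.of false, (FreeGroup.of true : FreeGroup Bool) ^ n * FreeGroup.of false *
      ((FreeGroup.of true)⁻¹) ^ n⁆ : FreeGroup Bool) ∈ llRels k :=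
    Or.inr (Set.mem_iUnion.mpr ⟨n, rfl⟩)
  have h2 := rel_one h
  rw [map_commutatorElement, map_mul, map_mul, map_pow, map_pow, map_inv] at h2
  exact commutatorElement_eq_one_iff_commute.mp h2

/-- The lamp generator at position `i`. -/
def lampx (k : ℕ) (i : ℤ) : Lamplighter k :=
  (llb k) ^ i * llc k * (llb k) ^ (-i)

lemma lampx_zero : lampx k 0 = llc k := by
  simp [lampx]

lemma lampx_conj (m i : ℤ) :
    (llb k) ^ m * lampx k i * (llb k) ^ (-m) = lampx k (m + i) := by
  simp only [lampx]
  rw [zpow_add, zpow_neg, zpow_neg, zpow_neg, zpow_add]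
  group

lemma lampx_commute (i j : ℤ) : Commute (lampx k i) (lampx k j) := by
  have key : ∀ i j : ℤ, i ≤ j → Commute (lampx k i) (lampx k j) := by
    intro i j hij
    have base := comm_rel (k := k) (j - i).toNat
    have h1 : ((llb k)⁻¹) ^ (j-i).toNat = (llb k) ^ (-((j-i).toNat : ℤ)) := by
      rw [zpow_neg, inv_pow, zpow_natCast]
    have h2 : (llb k) ^ (j-i).toNat = (llb k) ^ (((j-i).toNat : ℤ)) := (zpow_natCast _ _).symm
    rw [h1, h2] at base
    have := base.map (MulAut.conj ((llb k) ^ i)).toMonoidHom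
    simp only [MulEquiv.coe_toMonoidHom, MulAut.conj_apply] at this
    have e1 : (llb k) ^ i * llc k * ((llb k) ^ i)⁻¹ = lampx k i := by
      rw [lampx, zpow_neg]
    have e2 : (llb k) ^ i * ((llb k) ^ (((j-i).toNat:ℤ)) * llc k * (llb k) ^ (-((j-i).toNat:ℤ))) *
        ((llb k) ^ i)⁻¹ = lampx k j := by
      have : lampx k (i + ((j-i).toNat:ℤ)) = lampx k j := by
        rw [Int.toNat_of_nonneg (by omega)]; congr 1; omega
      rw [← this, ← lampx_conj, lampx, zpow_neg]
      group
    rwa [e1, e2] at this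
  rcases le_total i j with h | h
  · exact key i j h
  · exact (key j i h).symm

lemma lampx_pow_k (i : ℤ) : (lampx k i) ^ k = 1 := by
  rw [lampx, zpow_neg, conj_pow, c_pow_k, mul_one, mul_inv_cancel]

/-- The subgroup generated by the lamps. -/
def lampSub (k : ℕ) : Subgroup (Lamplighter k) :=
  Subgroup.closure (Set.range (lampx k))

lemma lampSub_comm {a b : Lamplighter k} (ha : a ∈ lampSub k) (hb : b ∈ lampSub k) :
    Commute a b := by
  induction ha, hb using Subgroup.closure_induction₂ with
  | mem x y hx hy =>
      obtain ⟨i, rfl⟩ := hx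
      obtain ⟨j, rfl⟩ := hy
      exact lampx_commute i j
  | one_left x hx => exact Commute.one_left x
  | one_right x hx => exact Commute.one_right x
  | mul_left x y z hx hy hz h1 h2 => exact h1.mul_left h2
  | mul_right y z x hy hz hx h1 h2 => exact h1.mul_right h2
  | inv_left x y hx hy h => exact h.inv_left
  | inv_right x y hx hy h => exact h.inv_right

noncomputable instance lampSubCommGroup : CommGroup (lampSub k) :=
  { (inferInstance : Group (lampSub k)) with
    mul_comm := fun a b => Subtype.ext (lampSub_comm a.2 b.2) }

/-- The lamp generator as element of the lamp subgroup. -/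
def xel (k : ℕ) (i : ℤ) : lampSub k :=
  ⟨lampx k i, Subgroup.subset_closure ⟨i, rfl⟩⟩

lemma xel_pow_k (i : ℤ) : (xel k i) ^ k = 1 := by
  ext
  push_cast [lampSub]
  exact lampx_pow_k i

/-- The homomorphism from the direct sum of `ℤ/k`'s to the lamp subgroup. -/
noncomputable def Pm (k : ℕ) : (ℤ →₀ ZMod k) →+ Additive (lampSub k) :=
  Finsupp.liftAddHom fun i => ZMod.lift k
    ⟨zmultiplesHom _ (Additive.ofMul (xel k i)), by
      show (k : ℤ) • Additive.ofMul (xel k i) = 0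
      rw [← ofMul_zpow, zpow_natCast, xel_pow_k]
      rfl⟩

lemma Pm_single [NeZero k] (i : ℤ) (r : ZMod k) :
    Additive.toMul (Pm k (Finsupp.single i r)) = xel k i ^ (r.val : ℤ) := by
  rw [Pm, Finsupp.liftAddHom_apply_single]
  have hr : ((r.val : ℤ) : ZMod k) = r := by
    rw [Int.cast_natCast, ZMod.natCast_val, ZMod.cast_id]
  conv_lhs => rw [← hr]
  rw [ZMod.lift_coe]
  rfl

/-- The product of lamps specified by a finitely supported function, in the lamplighter group. -/
noncomputable def PmL (k : ℕ) (a : ℤ →₀ ZMod k) : Lamplighter k :=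
  (Additive.toMul (Pm k a) : lampSub k)

lemma PmL_zero : PmL k 0 = 1 := by
  rw [PmL, map_zero]
  rfl

lemma PmL_add (a a' : ℤ →₀ ZMod k) : PmL k (a + a') = PmL k a * PmL k a' := by
  rw [PmL, map_add]
  rfl

lemma PmL_single [NeZero k] (i : ℤ) (r : ZMod k) :
    PmL k (Finsupp.single i r) = lampx k i ^ (r.val : ℤ) := by
  rw [PmL, Pm_single]
  push_cast
  rfl

lemma PmL_neg (a : ℤ →₀ ZMod k) : PmL k (-a) = (PmL k a)⁻¹ := by
  rw [eq_inv_iff_mul_eq_one, ← PmL_add, neg_add_cancel, PmL_zero]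

lemma b_conj_PmL [NeZero k] (m : ℤ) (a : ℤ →₀ ZMod k) :
    (llb k) ^ m * PmL k a * (llb k) ^ (-m) =
      PmL k (Finsupp.mapDomain (fun i => m + i) a) := by
  induction a using Finsupp.induction with
  | zero => rw [Finsupp.mapDomain_zero, PmL_zero, mul_one, zpow_neg, mul_inv_cancel]
  | single_add i r f hif hr ih =>
      rw [Finsupp.mapDomain_add, Finsupp.mapDomain_single, PmL_add, PmL_add, PmL_single,
        PmL_single]
      calc (llb k) ^ m * (lampx k i ^ (r.val:ℤ) * PmL k f) * (llb k) ^ (-m)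
          = ((llb k) ^ m * lampx k i ^ (r.val:ℤ) * (llb k) ^ (-m)) *
            ((llb k) ^ m * PmL k f * (llb k) ^ (-m)) := by
            rw [zpow_neg]
            group
        _ = lampx k (m + i) ^ (r.val:ℤ) * PmL k (Finsupp.mapDomain (fun i => m + i) f) := by
            rw [ih]
            congr 1
            rw [← lampx_conj m i]
            rw [zpow_neg, conj_zpow]

lemma exists_nf [NeZero k] [Fact (1 < k)] (g : Lamplighter k) :
    ∃ (a : ℤ →₀ ZMod k) (m : ℤ), g = PmL k a * (llb k) ^ m := by
  have inv_closed : ∀ (a : ℤ →₀ ZMod k) (m : ℤ), ∃ (a' : ℤ →₀ ZMod k) (m' : ℤ),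
      (PmL k a * (llb k) ^ m)⁻¹ = PmL k a' * (llb k) ^ m' := by
    intro a m
    refine ⟨Finsupp.mapDomain (fun i => -m + i) (-a), -m, ?_⟩
    rw [← b_conj_PmL, PmL_neg]
    group
  induction g using PresentedGroup.induction_on with
  | H w =>
    induction w using FreeGroup.induction_on with
    | C1 => exact ⟨0, 0, by rw [PmL_zero, map_one, zpow_zero, mul_one]⟩
    | of x =>
        cases x with
        | true =>
            refine ⟨0, 1, ?_⟩
            rw [PmL_zero, one_mul, zpow_one]
            rfl
        | false =>
            refine ⟨Finsupp.single 0 1, 0, ?_⟩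
            rw [PmL_single, zpow_zero, mul_one, lampx_zero, ZMod.val_one]
            rfl
    | inv_of x ih =>
        obtain ⟨a, m, hm⟩ := ih
        rw [map_inv, hm]
        exact inv_closed a m
    | mul x y ihx ihy =>
        obtain ⟨a, m, hm⟩ := ihx
        obtain ⟨a', m', hm'⟩ := ihy
        rw [map_mul, hm, hm']
        refine ⟨a + Finsupp.mapDomain (fun i => m + i) a', m + m', ?_⟩
        rw [PmL_add, ← b_conj_PmL]
        rw [zpow_add]
        group

/-! ### Computing `phi` on the normal form -/

/-- The translation vector of the lamp at position `i`. -/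
def W (k : ℕ) (i : ℤ) : ℕ → ZMod k := (i • pushE k) (d0 k)

/-- The translation vector associated to a configuration of lamps. -/
noncomputable def vec (k : ℕ) : (ℤ →₀ ZMod k) →+ (ℕ → ZMod k) :=
  Finsupp.liftAddHom fun i => AddMonoidHom.mk' (fun r => r • W k i)
    (fun r s => add_smul r s (W k i))

lemma vec_single (i : ℤ) (r : ZMod k) : vec k (Finsupp.single i r) = r • W k i := by
  rw [vec, Finsupp.liftAddHom_apply_single]
  rfl

lemma phi_lampx (i : ℤ) : phi k (lampx k i) = tPerm k (W k i) := by
  rw [lampx, map_mul, map_mul, map_zpow, map_zpow, phi_b, phi_c]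
  have h := B_zpow_conj_tPerm (k := k) i (d0 k)
  rw [MulAut.conj_apply] at h
  rw [zpow_neg]
  exact h

lemma phi_PmL [NeZero k] (a : ℤ →₀ ZMod k) : phi k (PmL k a) = tPerm k (vec k a) := by
  induction a using Finsupp.induction with
  | zero => rw [PmL_zero, map_one, map_zero, tPerm_zero]
  | single_add i r f hif hr ih =>
      rw [PmL_add, map_mul, map_add, ih, PmL_single, vec_single, map_zpow, phi_lampx,
        tPerm_zpow, ← tPerm_mul]
      congr 2
      have hr2 : ((r.val : ℤ) : ZMod k) = r := by
        rw [Int.cast_natCast, ZMod.natCast_val, ZMod.cast_id]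
      conv_rhs => rw [← hr2]
      rw [Int.cast_smul_eq_zsmul]

/-! ### Triangularity of the vectors `W` -/

lemma W_zero_eval : W k 0 = d0 k := rfl

lemma W_natCast (n : ℕ) : W k (n : ℤ) = (n • pushE k) (d0 k) := by
  rw [W, natCast_zsmul]

lemma W_eval_gt : ∀ n l : ℕ, n < l → W k (n : ℤ) (l) = 0 := by
  intro n
  rw [W_natCast]
  induction n with
  | zero =>
      intro l hl
      simp only [zero_nsmul]
      show d0 k l = 0
      simp [d0]
      omega
  | succ n ih =>
      intro l hl
      rw [succ_nsmul']
      obtain ⟨l', rfl⟩ : ∃ l', l = l' + 1 := ⟨l - 1, by omega⟩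
      show push k ((n • pushE k) (d0 k)) (l' + 1) = 0
      show (n • pushE k) (d0 k) (l' + 1) + (n • pushE k) (d0 k) l' = 0
      rw [ih (l' + 1) (by omega), ih l' (by omega), add_zero]

lemma W_eval_self : ∀ n : ℕ, W k (n : ℤ) n = 1 := by
  intro n
  rw [W_natCast]
  induction n with
  | zero => rfl
  | succ n ih =>
      rw [succ_nsmul']
      show (n • pushE k) (d0 k) (n + 1) + (n • pushE k) (d0 k) n = 1
      rw [← W_natCast, W_eval_gt n (n+1) (by omega), W_natCast, ih, zero_add]

lemma W_shift (N i : ℤ) : (N • pushE k) (W k i) = W k (N + i) := by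
  rw [W, W, add_zsmul, AddAut.add_apply]

lemma pushE_zpow_d0_eq (m : ℤ) (hk : 2 ≤ k) (h : W k m = d0 k) : m = 0 := by
  haveI : Fact (1 < k) := ⟨hk⟩
  by_contra hm
  have key : ∀ n : ℕ, W k ((n+1 : ℕ) : ℤ) ≠ d0 k := by
    intro n hcon
    have h1 := W_eval_self (k := k) (n+1)
    rw [hcon] at h1
    rw [show d0 k (n+1) = 0 from if_neg (Nat.succ_ne_zero n)] at h1
    exact one_ne_zero h1.symm
  cases m with
  | ofNat n =>
      cases n with
      | zero => exact hm rfl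
      | succ n => exact key n (by exact_mod_cast h)
  | negSucc n =>
      apply key n
      have : (((n+1:ℕ) : ℤ) • pushE k) (W k (Int.negSucc n)) = (((n+1:ℕ):ℤ) • pushE k) (d0 k) := by
        rw [h]
      rw [W_shift] at this
      have h2 : ((n+1:ℕ) : ℤ) + Int.negSucc n = 0 := by
        rw [Int.negSucc_eq]
        push_cast
        ring
      rw [h2] at this
      rw [W_zero_eval] at this
      rw [this]
      rfl

lemma vec_mapDomain (N : ℤ) (a : ℤ →₀ ZMod k) :
    vec k (Finsupp.mapDomain (fun i => N + i) a) = (N • pushE k) (vec k a) := by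
  induction a using Finsupp.induction with
  | zero => rw [Finsupp.mapDomain_zero, map_zero, map_zero]
  | single_add i r f hif hr ih =>
      rw [Finsupp.mapDomain_add, Finsupp.mapDomain_single, map_add, map_add, vec_single,
        map_add, ih, vec_single, pushE_zpow_smul, W_shift]

lemma vec_apply (a : ℤ →₀ ZMod k) (l : ℕ) :
    vec k a l = a.support.sum (fun i => a i * W k i l) := by
  rw [vec, Finsupp.liftAddHom_apply]
  rw [Finsupp.sum]
  rw [Finset.sum_apply]
  rfl

lemma vec_eq_zero [NeZero k] {a : ℤ →₀ ZMod k} (hk : 2 ≤ k) (h : vec k a = 0) : a = 0 := by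
  haveI : Fact (1 < k) := ⟨hk⟩
  by_contra ha
  have hs : a.support.Nonempty := Finsupp.support_nonempty_iff.mpr ha
  set N : ℕ := a.support.sup (fun i => i.natAbs) with hN
  have hpos : ∀ i ∈ a.support, 0 ≤ (N : ℤ) + i := by
    intro i hi
    have h1 : i.natAbs ≤ N := Finset.le_sup (f := fun i : ℤ => i.natAbs) hi
    omega
  set i₀ := a.support.max' hs with hi₀
  have hi₀mem : i₀ ∈ a.support := a.support.max'_mem hs
  set l : ℕ := ((N : ℤ) + i₀).toNat with hl
  have hva' : vec k (Finsupp.mapDomain (fun i => (N:ℤ) + i) a) = 0 := by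
    rw [vec_mapDomain, h, map_zero]
  have hsum : (vec k (Finsupp.mapDomain (fun i => (N:ℤ) + i) a)) l
      = a.support.sum (fun i => a i * W k ((N:ℤ) + i) l) := by
    rw [vec, Finsupp.liftAddHom_apply]
    rw [Finsupp.sum_mapDomain_index (by intro b; simp) (fun b m₁ m₂ => map_add _ m₁ m₂)]
    rw [Finsupp.sum, Finset.sum_apply]
    rfl
  have heval : a.support.sum (fun i => a i * W k ((N:ℤ) + i) l) = a i₀ := by
    rw [Finset.sum_eq_single_of_mem i₀ hi₀mem]
    · have : ((N:ℤ) + i₀) = (l : ℤ) := (Int.toNat_of_nonneg (hpos i₀ hi₀mem)).symm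
      rw [this, W_eval_self, mul_one]
    · intro i hi hne
      have hlt : i < i₀ := lt_of_le_of_ne (a.support.le_max' i hi) hne
      have h0 : ((N:ℤ) + i) = (((N:ℤ)+i).toNat : ℤ) := (Int.toNat_of_nonneg (hpos i hi)).symm
      rw [h0, W_eval_gt _ _ (by omega), mul_zero]
  rw [hva'] at hsum
  have : a i₀ = 0 := by rw [← heval, ← hsum]; rfl
  exact (Finsupp.mem_support_iff.mp hi₀mem) this

/-- Spanning: every finitely supported vector is a `vec`. -/
lemma exists_vec (n : ℕ) (f : ℕ → ZMod k) (hf : ∀ i, n ≤ i → f i = 0) :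
    ∃ a : ℤ →₀ ZMod k, vec k a = f := by
  induction n generalizing f with
  | zero =>
      refine ⟨0, ?_⟩
      rw [map_zero]
      funext i
      exact (hf i (Nat.zero_le i)).symm
  | succ n ih =>
      set g : ℕ → ZMod k := f - f n • W k (n : ℤ) with hg
      have hg0 : ∀ i, n ≤ i → g i = 0 := by
        intro i hi
        rcases eq_or_lt_of_le hi with heq | hlt
        · show f i - f n * W k (n:ℤ) i = 0
          rw [← heq, W_eval_self, mul_one, sub_self]
        · show f i - f n * W k (n:ℤ) i = 0
          rw [W_eval_gt _ _ hlt, mul_zero, hf i (by omega), sub_zero]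
      obtain ⟨a, hA⟩ := ih g hg0
      refine ⟨a + Finsupp.single (n : ℤ) (f n), ?_⟩
      rw [map_add, hA, vec_single, hg]
      funext i
      show (f i - f n * W k (n:ℤ) i) + f n * W k (n:ℤ) i = f i
      ring

/-! ### Faithfulness -/

lemma phi_injective (hk : 2 ≤ k) : Function.Injective (phi k) := by
  haveI : NeZero k := ⟨by omega⟩
  haveI : Fact (1 < k) := ⟨hk⟩
  rw [injective_iff_map_eq_one]
  intro g hg
  obtain ⟨a, m, rfl⟩ := exists_nf g
  rw [map_mul, phi_PmL, map_zpow, phi_b] at hg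
  have hBm : lampPerm k 0 ^ m = tPerm k (-(vec k a)) := by
    rw [← tPerm_inv]
    exact (mul_eq_one_iff_inv_eq.mp hg).symm
  have hconj := B_zpow_conj_tPerm (k := k) m (d0 k)
  rw [MulAut.conj_apply, hBm, tPerm_inv, tPerm_mul, tPerm_mul] at hconj
  have harr : -(vec k a) + d0 k + - -(vec k a) = d0 k := by abel
  rw [harr] at hconj
  have hm : m = 0 := pushE_zpow_d0_eq m hk (tPerm_injective hconj.symm)
  subst hm
  rw [zpow_zero, mul_one] at hg
  have hv : vec k a = 0 := tPerm_injective (by rw [hg, tPerm_zero])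
  have ha : a = 0 := vec_eq_zero hk hv
  rw [ha, zpow_zero, mul_one, PmL_zero]

/-! ### Length and prefix preservation -/

lemma lampAct_length : ∀ (l : List (ZMod k)) (r), (lampAct k r l).length = l.length
  | [], _ => rfl
  | x :: xs, r => by simp [lampAct, lampAct_length xs]

lemma tAct_length : ∀ (l : List (ZMod k)) (f), (tAct k f l).length = l.length
  | [], _ => rfl
  | x :: xs, f => by simp [tAct, tAct_length xs]

lemma lampAct_prefix : ∀ (l t : List (ZMod k)) (r), lampAct k r l <+: lampAct k r (l ++ t)
  | [], t, r => List.nil_prefix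
  | x :: xs, t, r => by
      obtain ⟨u, hu⟩ := lampAct_prefix xs t x
      exact ⟨u, by simp [lampAct, hu]⟩

lemma tAct_prefix : ∀ (l t : List (ZMod k)) (f), tAct k f l <+: tAct k f (l ++ t)
  | [], t, f => List.nil_prefix
  | x :: xs, t, f => by
      obtain ⟨u, hu⟩ := tAct_prefix xs t (f ∘ Nat.succ)
      exact ⟨u, by simp [tAct, hu]⟩

/-- The subgroup of permutations preserving lengths and prefixes. -/
def goodSub (k : ℕ) : Subgroup (Equiv.Perm (List (ZMod k))) where
  carrier := {σ | (∀ l, (σ l).length = l.length) ∧ ∀ l₁ l₂, l₁ <+: l₂ → σ l₁ <+: σ l₂}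
  one_mem' := ⟨fun l => rfl, fun l₁ l₂ h => h⟩
  mul_mem' := by
    rintro σ τ ⟨hσ1, hσ2⟩ ⟨hτ1, hτ2⟩
    refine ⟨fun l => ?_, fun l₁ l₂ h => ?_⟩
    · show (σ (τ l)).length = l.length
      rw [hσ1, hτ1]
    · exact hσ2 _ _ (hτ2 _ _ h)
  inv_mem' := by
    rintro σ ⟨h1, h2⟩
    have hlen : ∀ l, (σ⁻¹ l).length = l.length := by
      intro l
      have := h1 (σ⁻¹ l)
      rw [Equiv.Perm.coe_inv, Equiv.apply_symm_apply] at this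
      exact this.symm
    refine ⟨hlen, fun l₁ l₂ h12 => ?_⟩
    set t := (σ⁻¹ l₂).take l₁.length with ht
    have htpre : t <+: σ⁻¹ l₂ := List.take_prefix _ _
    have hst : σ t <+: l₂ := by
      have := h2 _ _ htpre
      rwa [Equiv.Perm.coe_inv, Equiv.apply_symm_apply] at this
    have hlen2 : (σ t).length = l₁.length := by
      rw [h1, ht, List.length_take, hlen]
      exact min_eq_left h12.length_le
    have hseq : σ t = l₁ := by
      have e1 := List.prefix_iff_eq_take.mp hst
      have e2 := List.prefix_iff_eq_take.mp h12
      rw [e1, hlen2, ← e2]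
    have : t = σ⁻¹ l₁ := by
      rw [← hseq, Equiv.Perm.coe_inv, Equiv.symm_apply_apply]
    rw [← this]
    exact htpre

lemma phi_mem_good (g : Lamplighter k) : phi k g ∈ goodSub k := by
  refine PresentedGroup.generated_by (llRels k) (Subgroup.comap (phi k) (goodSub k)) ?_ g
  intro j
  show phi k (PresentedGroup.of j) ∈ goodSub k
  cases j with
  | true =>
      rw [show (PresentedGroup.of true : Lamplighter k) = llb k from rfl, phi_b]
      exact ⟨fun l => lampAct_length l 0, by
        rintro l₁ l₂ ⟨t, rfl⟩
        exact lampAct_prefix l₁ t 0⟩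
  | false =>
      rw [show (PresentedGroup.of false : Lamplighter k) = llc k from rfl, phi_c]
      exact ⟨fun l => tAct_length l (d0 k), by
        rintro l₁ l₂ ⟨t, rfl⟩
        exact tAct_prefix l₁ t (d0 k)⟩

/-! ### Transitivity -/

lemma tAct_getD : ∀ (x y : List (ZMod k)), x.length = y.length →
    tAct k (fun i => y.getD i 0 - x.getD i 0) x = y
  | [], [], _ => rfl
  | a :: xs, b :: ys, h => by
      show (a + _) :: tAct k _ xs = b :: ys
      congr 1
      · show a + ((b :: ys).getD 0 0 - (a :: xs).getD 0 0) = b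
        simp
      · rw [tAct_congr (g := fun i => ys.getD i 0 - xs.getD i 0) (by funext i; simp)]
        exact tAct_getD xs ys (by simpa using h)

end LL

/-- The formula `c̄_r · (x₁x₂x₃…) = (x₁+r)(x₂+x₁)(x₃+x₂)…` defines an
action of the lamplighter group `L_k` by automorphisms of the rooted `k`-regular tree
(vertices = finite strings over `{0,…,k−1}`): a homomorphism to permutations of strings
that realizes the above formula on the generators `c̄_r = cʳb`, is faithful, preserves
levels (lengths) and the prefix relation, and is transitive on each level of the tree. -/
theorem lamplighter_tree_action (k : ℕ) (hk : 2 ≤ k) :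
    ∃ φ : Lamplighter k →* Equiv.Perm (List (ZMod k)),
      (∀ i : Fin k, ∀ l, φ ((llc k) ^ (i : ℕ) * llb k) l = lampAct k ((i : ℕ) : ZMod k) l) ∧
      Function.Injective φ ∧
      (∀ g l, (φ g l).length = l.length) ∧
      (∀ g l₁ l₂, l₁ <+: l₂ → φ g l₁ <+: φ g l₂) ∧
      (∀ x y : List (ZMod k), x.length = y.length → ∃ g, φ g x = y) := by
  haveI : NeZero k := ⟨by omega⟩
  haveI : Fact (1 < k) := ⟨hk⟩
  refine ⟨LL.phi k, ?_, LL.phi_injective hk, ?_, ?_, ?_⟩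
  · intro i l
    exact LL.phi_formula (i : ℕ) l
  · intro g l
    exact (LL.phi_mem_good g).1 l
  · intro g l₁ l₂ h
    exact (LL.phi_mem_good g).2 l₁ l₂ h
  · intro x y hxy
    obtain ⟨a, ha⟩ := LL.exists_vec x.length (fun i => y.getD i 0 - x.getD i 0)
      (fun i hi => by
        show y.getD i 0 - x.getD i 0 = 0
        rw [List.getD_eq_default _ _ (by omega : y.length ≤ i),
          List.getD_eq_default _ _ hi, sub_zero])
    refine ⟨LL.PmL k a, ?_⟩
    rw [LL.phi_PmL, ha]
    exact LL.tAct_getD x y hxy
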